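/- Let Λ₁ and Λ₂ be real p×r matrices of full column rank r, and let η₁, η₂ : [0,1] → ℝʳ be functions such that Λ₁ η₁(t) = Λ₂ η₂(t) for all t ∈ [0,1] and the set {η₂(t) : t ∈ [0,1]} spans ℝʳ. Then there exists an invertible r×r matrix P such that Λ₁ = Λ₂ P and η₁(t) = P⁻¹ η₂(t) for all t ∈ [0,1]. -/

import Mathlib

open Matrix

/-- If `Λ₁ η₁(t) = Λ₂ η₂(t)` for all `t ∈ [0,1]` with `Λ₁`, `Λ₂` of full column rank
and `{η₂(t)}` spanning `ℝʳ`, then `Λ₁ = Λ₂ P` and `η₁ = P⁻¹ η₂` for some invertible `P`. -/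
theorem loading_change_of_basis {p r : ℕ} (Λ₁ Λ₂ : Matrix (Fin p) (Fin r) ℝ)
    (hΛ₁ : LinearIndependent ℝ Λ₁ᵀ) (hΛ₂ : LinearIndependent ℝ Λ₂ᵀ)
    (η₁ η₂ : ℝ → Fin r → ℝ)
    (heq : ∀ t ∈ Set.Icc (0:ℝ) 1, Λ₁.mulVec (η₁ t) = Λ₂.mulVec (η₂ t))
    (hspan : Submodule.span ℝ (η₂ '' Set.Icc 0 1) = ⊤) :
    ∃ P : Matrix (Fin r) (Fin r) ℝ, IsUnit P ∧ Λ₁ = Λ₂ * P ∧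
      ∀ t ∈ Set.Icc (0:ℝ) 1, η₁ t = P⁻¹.mulVec (η₂ t) := by
  set L₁ := Λ₁.mulVecLin with hL₁
  set L₂ := Λ₂.mulVecLin with hL₂
  have inj₁ : Function.Injective L₁ := by
    intro x y hxy
    have : Λ₁ᵀᵀ.mulVec x = Λ₁ᵀᵀ.mulVec y := by simpa [hL₁] using hxy
    simp only [← Matrix.vecMul_transpose] at this
    exact Matrix.vecMul_injective_iff.mpr hΛ₁ this
  have inj₂ : Function.Injective L₂ := by
    intro x y hxy
    have : Λ₂ᵀᵀ.mulVec x = Λ₂ᵀᵀ.mulVec y := by simpa [hL₂] using hxy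
    simp only [← Matrix.vecMul_transpose] at this
    exact Matrix.vecMul_injective_iff.mpr hΛ₂ this
  -- range L₂ ≤ range L₁
  have hrange2 : LinearMap.range L₂ = Submodule.span ℝ ((fun t => L₂ (η₂ t)) '' Set.Icc 0 1) := by
    rw [← Set.image_image, ← Submodule.map_span, hspan, Submodule.map_top]
  have himg : (fun t => L₂ (η₂ t)) '' Set.Icc (0:ℝ) 1
      = (fun t => L₁ (η₁ t)) '' Set.Icc (0:ℝ) 1 := by
    apply Set.image_congr
    intro t ht
    exact (heq t ht).symm
  have hle : LinearMap.range L₂ ≤ LinearMap.range L₁ := by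
    rw [hrange2, himg]
    rw [Submodule.span_le]
    rintro x ⟨t, _, rfl⟩
    exact LinearMap.mem_range_self _ _
  have hfr1 : Module.finrank ℝ (LinearMap.range L₁) = r := by
    rw [LinearMap.finrank_range_of_inj inj₁]; simp
  have hfr2 : Module.finrank ℝ (LinearMap.range L₂) = r := by
    rw [LinearMap.finrank_range_of_inj inj₂]; simp
  have hreq : LinearMap.range L₂ = LinearMap.range L₁ :=
    Submodule.eq_of_le_of_finrank_le hle (by rw [hfr1, hfr2])
  -- define Q
  set e := LinearEquiv.ofInjective L₂ inj₂ with he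
  have hmem : ∀ x, L₁ x ∈ LinearMap.range L₂ := fun x => by
    rw [hreq]; exact LinearMap.mem_range_self _ _
  set Q : (Fin r → ℝ) →ₗ[ℝ] (Fin r → ℝ) :=
    e.symm.toLinearMap ∘ₗ L₁.codRestrict (LinearMap.range L₂) hmem with hQ
  have hQapp : ∀ x, L₂ (Q x) = L₁ x := by
    intro x
    have : (e (Q x) : Fin p → ℝ) = L₂ (Q x) := rfl
    rw [← this, hQ]
    simp only [LinearMap.coe_comp, Function.comp_apply, LinearEquiv.coe_coe,
      LinearEquiv.apply_symm_apply]
    rfl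
  have hQinj : Function.Injective Q := by
    intro x y hxy
    apply inj₁
    rw [← hQapp x, ← hQapp y, hxy]
  have hQbij : Function.Bijective Q :=
    ⟨hQinj, (LinearMap.injective_iff_surjective).mp hQinj⟩
  set P : Matrix (Fin r) (Fin r) ℝ := LinearMap.toMatrixAlgEquiv' Q with hP
  have hPmul : ∀ x, P.mulVec x = Q x := by
    intro x
    have : Matrix.toLinAlgEquiv' P x = Q x := by
      rw [hP, Matrix.toLinAlgEquiv'_toMatrixAlgEquiv']
    rwa [Matrix.toLinAlgEquiv'_apply] at this
  have hPunit : IsUnit P := by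
    have : IsUnit Q := (Module.End.isUnit_iff Q).mpr hQbij
    exact this.map LinearMap.toMatrixAlgEquiv'
  refine ⟨P, hPunit, ?_, ?_⟩
  · -- Λ₁ = Λ₂ * P
    apply Matrix.toLin'.injective
    apply LinearMap.ext
    intro x
    rw [Matrix.toLin'_apply, Matrix.toLin'_apply, ← Matrix.mulVec_mulVec, hPmul]
    exact (hQapp x).symm
  · intro t ht
    have h1 : L₂ (P.mulVec (η₁ t)) = L₂ (η₂ t) := by
      rw [hPmul, hQapp]
      exact heq t ht
    have h2 : P.mulVec (η₁ t) = η₂ t := inj₂ h1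
    rw [← h2, Matrix.mulVec_mulVec, Matrix.nonsing_inv_mul P
      ((Matrix.isUnit_iff_isUnit_det P).mp hPunit), Matrix.one_mulVec]
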